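/- Let T be a bounded operator on a complex Hilbert space with T² = 0. If Im T ≥ 0, then T is normal and hence T = 0. -/

import Mathlib

set_option synthInstance.maxHeartbeats 1000000
set_option maxHeartbeats 1000000

open ContinuousLinearMap in
open scoped InnerProductSpace in
lemma aux_apply_eq_zero_of_nonneg
    {H : Type*} [NormedAddCommGroup H] [InnerProductSpace ℂ H] [CompleteSpace H]
    {A : H →L[ℂ] H} (hA : (0 : H →L[ℂ] H) ≤ A) {x : H}
    (h : ⟪A x, x⟫_ℂ = 0) : A x = 0 := by
  set S := CFC.sqrt A with hSdef
  have hmul : S * S = A := CFC.sqrt_mul_sqrt_self A hA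
  have hS : (0 : H →L[ℂ] H) ≤ S := CFC.sqrt_nonneg (a := A)
  have hSsa : IsSelfAdjoint S := ((nonneg_iff_isPositive S).mp hS).isSelfAdjoint
  have hadj : ContinuousLinearMap.adjoint S = S := hSsa.adjoint_eq
  have hinner : ⟪S x, S x⟫_ℂ = 0 := by
    calc ⟪S x, S x⟫_ℂ = ⟪(ContinuousLinearMap.adjoint S) (S x), x⟫_ℂ :=
          (ContinuousLinearMap.adjoint_inner_left S x (S x)).symm
      _ = ⟪S (S x), x⟫_ℂ := by rw [hadj]
      _ = ⟪A x, x⟫_ℂ := by rw [← ContinuousLinearMap.mul_apply, hmul]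
      _ = 0 := h
  have hSx : S x = 0 := inner_self_eq_zero.mp hinner
  have : (S * S) x = 0 := by rw [ContinuousLinearMap.mul_apply, hSx, map_zero]
  rwa [hmul] at this

section
open scoped InnerProductSpace

open ContinuousLinearMap in
theorem eq_zero_of_sq_eq_zero_of_im_nonneg
    {H : Type*} [NormedAddCommGroup H] [InnerProductSpace ℂ H] [CompleteSpace H]
    (T : H →L[ℂ] H) (hsq : T ^ 2 = 0)
    (him : 0 ≤ (2 * Complex.I)⁻¹ • (T - ContinuousLinearMap.adjoint T)) :
    IsStarNormal T ∧ T = 0 := by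
  set A := (2 * Complex.I)⁻¹ • (T - ContinuousLinearMap.adjoint T) with hAdef
  have hTT : ∀ y, T (T y) = 0 := by
    intro y
    have : (T ^ 2) y = 0 := by rw [hsq]; rfl
    rwa [pow_two, ContinuousLinearMap.mul_apply] at this
  have hT0 : T = 0 := by
    ext y
    have hATy : A (T y) = 0 := by
      apply aux_apply_eq_zero_of_nonneg him
      have : A (T y) = (2 * Complex.I)⁻¹ • (T (T y) - ContinuousLinearMap.adjoint T (T y)) := by
        simp [hAdef]
      rw [this, hTT y, zero_sub, inner_smul_left, inner_neg_left,
        ContinuousLinearMap.adjoint_inner_left, hTT y, inner_zero_right]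
      ring
    have hc : (2 * Complex.I)⁻¹ ≠ 0 := by
      simp [Complex.I_ne_zero]
    have hsub : T (T y) - ContinuousLinearMap.adjoint T (T y) = 0 := by
      have : (2 * Complex.I)⁻¹ • (T (T y) - ContinuousLinearMap.adjoint T (T y)) = 0 := by
        rw [← hATy]; simp [hAdef]
      exact (smul_eq_zero.mp this).resolve_left hc
    have hadjTy : ContinuousLinearMap.adjoint T (T y) = 0 := by
      rw [hTT y, zero_sub, neg_eq_zero] at hsub
      exact hsub
    have : ⟪T y, T y⟫_ℂ = 0 := by
      rw [← ContinuousLinearMap.adjoint_inner_left, hadjTy, inner_zero_left]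
    simpa using inner_self_eq_zero.mp this
  refine ⟨?_, hT0⟩
  rw [hT0]
  infer_instance

end
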